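/- Let $0<p,q<\infty$ with $p\ne q$, and let $\mu$ be a finite positive Borel measure on $\mathbb{D}$. Then there do not exist constants $C>c>0$ such that $c\|f\|_{H^p}\le\|f\|_{L^q(\mu)}\le C\|f\|_{H^p}$ for all $f\in H^p$. -/

import Mathlib

open MeasureTheory Set ENNReal

noncomputable section

/-- The open unit disk in the complex plane. -/
def unitDisk : Set ℂ := Metric.ball 0 1

/-- The `L^q` (quasi)norm, as an extended real, of a complex-valued function
with respect to a measure. -/
def lqNorm {α : Type*} [MeasurableSpace α] (q : ℝ) (μ : Measure α) (f : α → ℂ) : ℝ≥0∞ :=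
  (∫⁻ x, (‖f x‖₊ : ℝ≥0∞) ^ q ∂μ) ^ (1 / q)

/-- The `p`-th integral mean of `f` over the circle of radius `r`, with respect to
normalized arc length measure. -/
def circleMean (p : ℝ) (r : ℝ) (f : ℂ → ℂ) : ℝ≥0∞ :=
  ((∫⁻ θ in Set.Ioc (0 : ℝ) (2 * Real.pi),
      (‖f ((r : ℂ) * Complex.exp ((θ : ℂ) * Complex.I))‖₊ : ℝ≥0∞) ^ p) /
    ENNReal.ofReal (2 * Real.pi)) ^ (1 / p)

/-- The Hardy space `H^p` (quasi)norm: the supremum of the integral means over circles. -/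
def hardyNorm (p : ℝ) (f : ℂ → ℂ) : ℝ≥0∞ :=
  ⨆ r : Set.Ioo (0 : ℝ) 1, circleMean p (r : ℝ) f

/-- Membership in the Hardy space `H^p` of the unit disk. -/
def MemHardy (p : ℝ) (f : ℂ → ℂ) : Prop :=
  DifferentiableOn ℂ f unitDisk ∧ hardyNorm p f < ⊤

/-- Membership in `H^∞`: bounded holomorphic functions on the unit disk. -/
def MemHinf (f : ℂ → ℂ) : Prop :=
  DifferentiableOn ℂ f unitDisk ∧ ∃ C : ℝ, ∀ z ∈ unitDisk, ‖f z‖ ≤ C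

/-- `z` is an `H^∞`-interpolating sequence: every bounded sequence of values can be
interpolated by a bounded holomorphic function. -/
def InterpolatingSeq (z : ℕ → ℂ) : Prop :=
  ∀ w : ℕ → ℂ, (∃ M : ℝ, ∀ n, ‖w n‖ ≤ M) → ∃ f, MemHinf f ∧ ∀ n, f (z n) = w n

/-- `μ` is a `(p,q)`-Carleson measure: the embedding `H^p ⊆ L^q(μ)` holds (with its norm
estimate, which is automatic by the closed graph theorem). -/
def CarlesonPQ (p q : ℝ) (μ : Measure ℂ) : Prop :=
  ∃ C : ℝ, 0 < C ∧ ∀ f, MemHardy p f → lqNorm q μ f ≤ ENNReal.ofReal C * hardyNorm p f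

/-- The range of the embedding `j_{p,q}(μ) : H^p ↪ L^q(μ)` is closed in `L^q(μ)`:
every element of `L^q(μ)` which can be approximated in `L^q(μ)` by `H^p` functions
agrees `μ`-a.e. with an `H^p` function. -/
def HardyClosedRange (p q : ℝ) (μ : Measure ℂ) : Prop :=
  ∀ g : ℂ → ℂ, lqNorm q μ g < ⊤ →
    (∀ ε : ℝ, 0 < ε → ∃ f, MemHardy p f ∧ lqNorm q μ (fun x => f x - g x) < ENNReal.ofReal ε) →
    ∃ f, MemHardy p f ∧ f =ᵐ[μ] g

/-- Normalized area measure on the unit disk. -/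
def normArea : Measure ℂ := (ENNReal.ofReal Real.pi)⁻¹ • ((volume : Measure ℂ).restrict unitDisk)

/-- The Bergman space `A^p` (quasi)norm. -/
def bergmanNorm (p : ℝ) (f : ℂ → ℂ) : ℝ≥0∞ := lqNorm p normArea f

/-- Membership in the Bergman space `A^p` of the unit disk. -/
def MemBergman (p : ℝ) (f : ℂ → ℂ) : Prop :=
  DifferentiableOn ℂ f unitDisk ∧ bergmanNorm p f < ⊤

/-- `μ` is a `(p,q)`-Bergman-Carleson measure: `A^p ⊆ L^q(μ)` with its norm estimate. -/
def BergmanCarlesonPQ (p q : ℝ) (μ : Measure ℂ) : Prop :=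
  ∃ C : ℝ, 0 < C ∧ ∀ f, MemBergman p f → lqNorm q μ f ≤ ENNReal.ofReal C * bergmanNorm p f

/-- `μ` is a sampling measure for `A^p`: two-sided norm equivalence on `A^p`. -/
def SamplingMeasure (p : ℝ) (μ : Measure ℂ) : Prop :=
  BergmanCarlesonPQ p p μ ∧
    ∃ c : ℝ, 0 < c ∧ ∀ f, MemBergman p f →
      ENNReal.ofReal c * bergmanNorm p f ≤ lqNorm p μ f

/-- The range of the embedding `J_{p,q}(μ) : A^p ↪ L^q(μ)` is closed in `L^q(μ)`. -/
def BergmanClosedRange (p q : ℝ) (μ : Measure ℂ) : Prop :=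
  ∀ g : ℂ → ℂ, lqNorm q μ g < ⊤ →
    (∀ ε : ℝ, 0 < ε → ∃ f, MemBergman p f ∧ lqNorm q μ (fun x => f x - g x) < ENNReal.ofReal ε) →
    ∃ f, MemBergman p f ∧ f =ᵐ[μ] g

/-- `z` is an `A^p`-interpolating sequence: the trace space `A^p|_z` coincides with the
weighted sequence space `{w : ∑ |w n|^p (1-|z n|)^2 < ∞}`. -/
def APInterpolating (p : ℝ) (z : ℕ → ℂ) : Prop :=
  (∀ f, MemBergman p f →
      ∑' n, ENNReal.ofReal ((1 - ‖z n‖) ^ 2) * (‖f (z n)‖₊ : ℝ≥0∞) ^ p < ⊤) ∧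
  (∀ w : ℕ → ℂ, ∑' n, ENNReal.ofReal ((1 - ‖z n‖) ^ 2) * (‖w n‖₊ : ℝ≥0∞) ^ p < ⊤ →
      ∃ f, MemBergman p f ∧ ∀ n, f (z n) = w n)

/-- The trace (quasi)norm on `H^p|_z` of a sequence of values `W`. -/
def hardyTraceNorm (p : ℝ) (z : ℕ → ℂ) (W : ℕ → ℂ) : ℝ≥0∞ :=
  sInf {t : ℝ≥0∞ | ∃ f, MemHardy p f ∧ (∀ n, f (z n) = W n) ∧ t = hardyNorm p f}

/-- The trace (quasi)norm on `A^p|_z` of a sequence of values `W`. -/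
def bergmanTraceNorm (p : ℝ) (z : ℕ → ℂ) (W : ℕ → ℂ) : ℝ≥0∞ :=
  sInf {t : ℝ≥0∞ | ∃ f, MemBergman p f ∧ (∀ n, f (z n) = W n) ∧ t = bergmanNorm p f}

/-- The trace space `H^p|_z` is an ideal space: multiplication by sequences bounded by `1`
acts uniformly boundedly on it. -/
def IdealHardyTrace (p : ℝ) (z : ℕ → ℂ) : Prop :=
  ∃ K : ℝ, 0 < K ∧ ∀ m W : ℕ → ℂ, (∀ n, ‖m n‖ ≤ 1) →
    hardyTraceNorm p z (fun n => m n * W n) ≤ ENNReal.ofReal K * hardyTraceNorm p z W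

/-- The trace space `A^p|_z` is an ideal space. -/
def IdealBergmanTrace (p : ℝ) (z : ℕ → ℂ) : Prop :=
  ∃ K : ℝ, 0 < K ∧ ∀ m W : ℕ → ℂ, (∀ n, ‖m n‖ ≤ 1) →
    bergmanTraceNorm p z (fun n => m n * W n) ≤ ENNReal.ofReal K * bergmanTraceNorm p z W

/-- The circle mean of a monomial `z ^ n` is `‖r ^ n‖₊`. -/
lemma circleMean_monomial (p r : ℝ) (hp : 0 < p) (n : ℕ) :
    circleMean p r (fun z => z ^ n) = (‖r ^ n‖₊ : ℝ≥0∞) := by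
  have h2pi : (0:ℝ) < 2 * Real.pi := by positivity
  have hnn : ∀ θ : ℝ, ‖((r:ℂ) * Complex.exp ((θ:ℂ) * Complex.I))^n‖₊ = ‖r^n‖₊ := by
    intro θ; ext
    simp [Complex.norm_exp, abs_pow, _root_.abs_abs]
  unfold circleMean
  simp only [hnn]
  rw [setLIntegral_const, Real.volume_Ioc, sub_zero,
    mul_div_assoc, ENNReal.div_self (by simp [h2pi, Real.pi_pos]) ENNReal.ofReal_ne_top, mul_one,
    ← ENNReal.rpow_mul, mul_one_div, div_self hp.ne', ENNReal.rpow_one]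

/-- for `p ≠ q` there is no two-sided estimate
`c‖f‖_{H^p} ≤ ‖f‖_{L^q(μ)} ≤ C‖f‖_{H^p}` on `H^p` for a finite measure `μ` on the disk. -/
theorem stmt7 (p q : ℝ) (hp : 0 < p) (hq : 0 < q) (hpq : p ≠ q)
    (μ : Measure ℂ) [IsFiniteMeasure μ] (hsupp : μ unitDiskᶜ = 0) :
    ¬ ∃ c C : ℝ, 0 < c ∧ c < C ∧ ∀ f, MemHardy p f →
        ENNReal.ofReal c * hardyNorm p f ≤ lqNorm q μ f ∧
          lqNorm q μ f ≤ ENNReal.ofReal C * hardyNorm p f := by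
  rintro ⟨c, C, hc, hcC, h⟩
  -- circle means of monomials, for radii in `(0,1)`
  have hcm : ∀ (n : ℕ) (r : ℝ), 0 ≤ r →
      circleMean p r (fun z => z ^ n) = ENNReal.ofReal (r ^ n) := by
    intro n r hr
    rw [circleMean_monomial p r hp n, ← ENNReal.ofReal_coe_nnreal, coe_nnnorm,
      Real.norm_of_nonneg (by positivity)]
  -- Hardy norm of monomials is at most 1
  have hup : ∀ n : ℕ, hardyNorm p (fun z => z ^ n) ≤ 1 := by
    intro n
    refine iSup_le fun r => ?_
    rw [hcm n r r.2.1.le]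
    exact ENNReal.ofReal_le_one.2 (pow_le_one₀ r.2.1.le r.2.2.le)
  -- monomials are in `H^p`
  have hmem : ∀ n : ℕ, MemHardy p (fun z => z ^ n) := fun n =>
    ⟨(differentiable_pow n).differentiableOn, lt_of_le_of_lt (hup n) one_lt_top⟩
  -- Hardy norm of monomials is at least 1
  have hlow : ∀ n : ℕ, (1 : ℝ≥0∞) ≤ hardyNorm p (fun z => z ^ n) := by
    intro n
    have hrk : ∀ k : ℕ, (1 - 1/((k:ℝ)+2)) ∈ Set.Ioo (0:ℝ) 1 := by
      intro k
      constructor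
      · have : 1/((k:ℝ)+2) < 1 := by
          rw [div_lt_one (by positivity)]
          have : (0:ℝ) ≤ (k:ℝ) := Nat.cast_nonneg k
          linarith
        linarith
      · have : 0 < 1/((k:ℝ)+2) := by positivity
        linarith
    have h1 : Filter.Tendsto (fun k : ℕ => (1 - 1/((k:ℝ)+2))^n) Filter.atTop (nhds 1) := by
      have h0 : Filter.Tendsto (fun k : ℕ => 1/((k:ℝ)+2)) Filter.atTop (nhds 0) := by
        simp only [one_div]
        exact tendsto_inv_atTop_zero.comp
          (Filter.tendsto_atTop_add_const_right _ 2 tendsto_natCast_atTop_atTop)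
      have h1' : Filter.Tendsto (fun k : ℕ => 1 - 1/((k:ℝ)+2)) Filter.atTop (nhds (1-0)) :=
        tendsto_const_nhds.sub h0
      simpa using h1'.pow n
    have key : Filter.Tendsto (fun k : ℕ => ENNReal.ofReal ((1 - 1/((k:ℝ)+2))^n))
        Filter.atTop (nhds 1) := by
      simpa [Function.comp_def] using (ENNReal.continuous_ofReal.tendsto 1).comp h1
    refine le_of_tendsto' key fun k => ?_
    calc ENNReal.ofReal ((1 - 1/((k:ℝ)+2))^n)
        = circleMean p ((⟨_, hrk k⟩ : Set.Ioo (0:ℝ) 1) : ℝ) (fun z => z ^ n) :=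
          (hcm n _ (hrk k).1.le).symm
      _ ≤ hardyNorm p (fun z => z ^ n) :=
          le_iSup (fun r : Set.Ioo (0:ℝ) 1 => circleMean p (r:ℝ) fun z => z ^ n)
            (⟨_, hrk k⟩ : Set.Ioo (0:ℝ) 1)
  -- the `L^q(μ)` integrals of monomials
  set I : ℕ → ℝ≥0∞ := fun n => ∫⁻ z, ((‖z‖₊ : ℝ≥0∞) ^ n) ^ q ∂μ with hI
  have hlq : ∀ n : ℕ, lqNorm q μ (fun z => z ^ n) = (I n) ^ (1/q) := by
    intro n
    unfold lqNorm
    congr 1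
    refine lintegral_congr fun z => ?_
    simp
  -- a.e. bound
  have hae : ∀ᵐ z ∂μ, (‖z‖₊ : ℝ≥0∞) < 1 := by
    have hmem' : ∀ᵐ z ∂μ, z ∈ unitDisk := by
      rw [MeasureTheory.ae_iff]
      exact hsupp
    filter_upwards [hmem'] with z hz
    have hz1 : ‖z‖ < 1 := by
      simpa [unitDisk, Metric.mem_ball, dist_zero_right] using hz
    rw [← ENNReal.coe_one, ENNReal.coe_lt_coe, ← NNReal.coe_lt_coe]
    simpa using hz1
  -- dominated convergence: `I n → 0`
  have hItend : Filter.Tendsto I Filter.atTop (nhds 0) := by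
    have h0 : Filter.Tendsto I Filter.atTop (nhds (∫⁻ _, (0:ℝ≥0∞) ∂μ)) := by
      refine tendsto_lintegral_of_dominated_convergence (fun _ => 1) ?_ ?_ ?_ ?_
      · intro n
        exact ((measurable_nnnorm.coe_nnreal_ennreal).pow_const n).pow_const q
      · intro n
        filter_upwards [hae] with z hz
        exact ENNReal.rpow_le_one (pow_le_one' hz.le n) hq.le
      · simp [measure_ne_top μ]
      · filter_upwards [hae] with z hz
        have h0 : Filter.Tendsto (fun n : ℕ => (‖z‖₊ : ℝ≥0∞) ^ n) Filter.atTop (nhds 0) :=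
          ENNReal.tendsto_pow_atTop_nhds_zero_of_lt_one hz
        have := ((ENNReal.continuous_rpow_const (y := q)).tendsto 0).comp h0
        simpa [Function.comp_def, ENNReal.zero_rpow_of_pos hq] using this
    simpa using h0
  -- the lower estimate gives `(ofReal c)^q ≤ I n` for all `n`
  have hIlow : ∀ n : ℕ, (ENNReal.ofReal c) ^ q ≤ I n := by
    intro n
    have h1 := (h _ (hmem n)).1
    have h2 : ENNReal.ofReal c ≤ lqNorm q μ (fun z => z ^ n) := by
      calc ENNReal.ofReal c = ENNReal.ofReal c * 1 := (mul_one _).symm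
        _ ≤ ENNReal.ofReal c * hardyNorm p (fun z => z ^ n) :=
            mul_le_mul_right (hlow n) _
        _ ≤ lqNorm q μ (fun z => z ^ n) := h1
    rw [hlq n] at h2
    have h3 := ENNReal.rpow_le_rpow h2 hq.le
    rwa [← ENNReal.rpow_mul, one_div_mul_cancel hq.ne', ENNReal.rpow_one] at h3
  -- contradiction
  have hle : (ENNReal.ofReal c) ^ q ≤ 0 := ge_of_tendsto' hItend hIlow
  have hpos : 0 < (ENNReal.ofReal c) ^ q :=
    ENNReal.rpow_pos (ENNReal.ofReal_pos.2 hc) ENNReal.ofReal_ne_top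
  exact absurd (le_antisymm hle hpos.le) hpos.ne'
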